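/- arXiv:2307.08868 — 2 statements merged into one kernel-verified Lean document; each statement's English description precedes it below -/
import Mathlib

section
/- Let n ≥ 2, let (θ_{i,j})_{i,j≥1} be a coagulation kernel satisfying (K1) and (K3), and let f^n = (f_i^n)_{1≤i≤n} be the nonnegative global solution of the truncated RBK system with nonnegative initial data. Then for every t ∈ (0,∞), Σ_{i=1}^{n} i f_i^n(t) ≤ (2/R) ( Σ_{i=1}^{n} f_i^{n,in} )^{1/2} t^{−1/2}. -/
open MeasureTheory Finset Filter

/-- `IsTruncRBKOn θ n I f` : the family `(f i)_{1 ≤ i ≤ n}` solves the truncated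
Redner–Ben-Avraham–Kahng coagulation system of size `n` with kernel `θ` on the set `I`:
`df_i/dt = ∑_{j=1}^{n-i} θ_{i+j,j} f_{i+j} f_j − ∑_{j=1}^{n} θ_{i,j} f_i f_j`. -/
def IsTruncRBKOn (θ : ℕ → ℕ → ℝ) (n : ℕ) (I : Set ℝ) (f : ℕ → ℝ → ℝ) : Prop :=
  ∀ i ∈ Finset.Icc 1 n, ∀ t ∈ I,
    HasDerivWithinAt (f i)
      ((∑ j ∈ Finset.Icc 1 (n - i), θ (i + j) j * f (i + j) t * f j t)
        - ∑ j ∈ Finset.Icc 1 n, θ i j * f i t * f j t) I t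
lemma rbk_tri_eq {n k : ℕ} (hk : k ≤ n) (g : ℕ → ℝ) :
    ∑ j ∈ Icc 1 (k - 1), g j = ∑ j ∈ Icc 1 n, if j < k then g j else 0 := by
  rw [← Finset.sum_filter]
  apply Finset.sum_congr _ (fun _ _ => rfl)
  ext j
  simp only [Finset.mem_Icc, Finset.mem_filter]
  omega

lemma rbk_cut_eq {n i : ℕ} (hi : i ≤ n) (g : ℕ → ℝ) :
    ∑ j ∈ Icc 1 (n - i), g j = ∑ j ∈ Icc 1 n, if i + j ≤ n then g j else 0 := by
  rw [← Finset.sum_filter]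
  apply Finset.sum_congr _ (fun _ _ => rfl)
  ext j
  simp only [Finset.mem_Icc, Finset.mem_filter]
  omega

lemma rbk_reindex (n : ℕ) (G : ℕ → ℕ → ℝ) :
    ∑ i ∈ Icc 1 n, ∑ j ∈ Icc 1 (n - i), G (i + j) j
      = ∑ k ∈ Icc 1 n, ∑ j ∈ Icc 1 (k - 1), G k j := by
  have l1 : ∑ i ∈ Icc 1 n, ∑ j ∈ Icc 1 (n - i), G (i + j) j
      = ∑ p ∈ (Icc 1 n ×ˢ Icc 1 n).filter (fun p => p.1 + p.2 ≤ n), G (p.1 + p.2) p.2 := by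
    rw [Finset.sum_filter, Finset.sum_product]
    exact Finset.sum_congr rfl fun i hi => rbk_cut_eq (Finset.mem_Icc.mp hi).2 _
  have l2 : ∑ k ∈ Icc 1 n, ∑ j ∈ Icc 1 (k - 1), G k j
      = ∑ p ∈ (Icc 1 n ×ˢ Icc 1 n).filter (fun p => p.2 < p.1), G p.1 p.2 := by
    rw [Finset.sum_filter, Finset.sum_product]
    exact Finset.sum_congr rfl fun k hk => rbk_tri_eq (Finset.mem_Icc.mp hk).2 _
  rw [l1, l2]
  refine Finset.sum_nbij' (fun p => (p.1 + p.2, p.2)) (fun p => (p.1 - p.2, p.2)) ?_ ?_ ?_ ?_ ?_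
  · rintro ⟨a, b⟩ h
    simp only [Finset.mem_filter, Finset.mem_product, Finset.mem_Icc] at h ⊢
    omega
  · rintro ⟨a, b⟩ h
    simp only [Finset.mem_filter, Finset.mem_product, Finset.mem_Icc] at h ⊢
    omega
  · rintro ⟨a, b⟩ h
    simp only [Finset.mem_filter, Finset.mem_product, Finset.mem_Icc] at h
    show (a + b - b, b) = (a, b)
    simp only [Prod.mk.injEq, and_true]
    omega
  · rintro ⟨a, b⟩ h
    simp only [Finset.mem_filter, Finset.mem_product, Finset.mem_Icc] at h
    show (a - b + b, b) = (a, b)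
    simp only [Prod.mk.injEq, and_true]
    omega
  · rintro ⟨a, b⟩ h
    rfl

lemma rbk_tri_half (n : ℕ) (h : ℕ → ℕ → ℝ)
    (hnn : ∀ k ∈ Icc 1 n, ∀ j ∈ Icc 1 n, 0 ≤ h k j)
    (hsymm : ∀ k ∈ Icc 1 n, ∀ j ∈ Icc 1 n, h k j = h j k) :
    2 * (∑ k ∈ Icc 1 n, ∑ j ∈ Icc 1 (k - 1), h k j) ≤ ∑ k ∈ Icc 1 n, ∑ j ∈ Icc 1 n, h k j := by
  have hT : ∑ k ∈ Icc 1 n, ∑ j ∈ Icc 1 (k - 1), h k j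
      = ∑ k ∈ Icc 1 n, ∑ j ∈ Icc 1 n, if j < k then h k j else 0 :=
    Finset.sum_congr rfl fun k hk => rbk_tri_eq (Finset.mem_Icc.mp hk).2 _
  have hswap : ∑ k ∈ Icc 1 n, ∑ j ∈ Icc 1 n, (if k < j then h k j else 0)
      = ∑ k ∈ Icc 1 n, ∑ j ∈ Icc 1 n, (if j < k then h k j else 0) := by
    rw [Finset.sum_comm]
    refine Finset.sum_congr rfl fun k hk => Finset.sum_congr rfl fun j hj => ?_
    by_cases hc : j < k
    · rw [if_pos hc, if_pos hc, hsymm j hj k hk]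
    · rw [if_neg hc, if_neg hc]
  rw [hT, two_mul]
  nth_rewrite 2 [← hswap]
  rw [← Finset.sum_add_distrib]
  refine Finset.sum_le_sum fun k hk => ?_
  rw [← Finset.sum_add_distrib]
  refine Finset.sum_le_sum fun j hj => ?_
  rcases lt_trichotomy j k with hc | hc | hc
  · rw [if_pos hc, if_neg (by omega : ¬ k < j), add_zero]
  · rw [if_neg (by omega : ¬ j < k), if_neg (by omega : ¬ k < j), add_zero]
    exact hnn k hk j hj
  · rw [if_neg (by omega : ¬ j < k), if_pos hc, zero_add]

/-- Under (K1) and (K3) (`ω_i ≥ R i`, `κ_{i,j} ≤ A ω_i ω_j`), the nonnegative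
global solution of the truncated RBK system satisfies, for every `t > 0`,
`∑_{i=1}^n i f_i(t) ≤ (2/R) (∑_{i=1}^n fin_i)^{1/2} t^{−1/2}`. -/
theorem truncRBK_mass_decay
    (θ : ℕ → ℕ → ℝ) (ω : ℕ → ℝ) (κ : ℕ → ℕ → ℝ)
    (hθ_symm : ∀ i j : ℕ, 1 ≤ i → 1 ≤ j → θ i j = θ j i)
    -- (K1)
    (hK1 : ∀ i j : ℕ, 1 ≤ i → 1 ≤ j → θ i j = ω i * ω j + κ i j)
    (hω_nonneg : ∀ i : ℕ, 1 ≤ i → 0 ≤ ω i)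
    (hκ_nonneg : ∀ i j : ℕ, 1 ≤ i → 1 ≤ j → 0 ≤ κ i j)
    (hκ_symm : ∀ i j : ℕ, 1 ≤ i → 1 ≤ j → κ i j = κ j i)
    -- (K3)
    (R A : ℝ) (hR : 0 < R) (hA : 0 < A)
    (hωR : ∀ i : ℕ, 1 ≤ i → R * i ≤ ω i)
    (hκA : ∀ i j : ℕ, 1 ≤ i → 1 ≤ j → κ i j ≤ A * (ω i * ω j))
    (n : ℕ) (hn : 2 ≤ n)
    (fin : ℕ → ℝ) (hfin : ∀ i ∈ Finset.Icc 1 n, 0 ≤ fin i)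
    (f : ℕ → ℝ → ℝ) (hf : IsTruncRBKOn θ n (Set.Ici 0) f)
    (hinit : ∀ i ∈ Finset.Icc 1 n, f i 0 = fin i)
    (hf_nonneg : ∀ i ∈ Finset.Icc 1 n, ∀ t ∈ Set.Ici (0:ℝ), 0 ≤ f i t)
    (t : ℝ) (ht : 0 < t) :
    ∑ i ∈ Finset.Icc 1 n, (i : ℝ) * f i t
      ≤ (2 / R) * Real.sqrt (∑ i ∈ Finset.Icc 1 n, fin i) * (Real.sqrt t)⁻¹ := by
    classical
  have hθ_nonneg : ∀ i j : ℕ, 1 ≤ i → 1 ≤ j → 0 ≤ θ i j := by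
    intro i j hi hj
    rw [hK1 i j hi hj]
    exact add_nonneg (mul_nonneg (hω_nonneg i hi) (hω_nonneg j hj)) (hκ_nonneg i j hi hj)
  have hterm : ∀ s ∈ Set.Ici (0:ℝ), ∀ k ∈ Finset.Icc 1 n, ∀ j ∈ Finset.Icc 1 n,
      0 ≤ θ k j * f k s * f j s := by
    intro s hs k hk j hj
    exact mul_nonneg (mul_nonneg
      (hθ_nonneg k j (Finset.mem_Icc.mp hk).1 (Finset.mem_Icc.mp hj).1)
      (hf_nonneg k hk s hs)) (hf_nonneg j hj s hs)
  have hM₁nonneg : ∀ s ∈ Set.Ici (0:ℝ), 0 ≤ ∑ i ∈ Finset.Icc 1 n, (i:ℝ) * f i s := by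
    intro s hs
    exact Finset.sum_nonneg fun i hi =>
      mul_nonneg (Nat.cast_nonneg i) (hf_nonneg i hi s hs)
  -- derivatives
  have hM₀' : ∀ s ∈ Set.Ici (0:ℝ),
      HasDerivWithinAt (fun u => ∑ i ∈ Finset.Icc 1 n, f i u)
        (∑ i ∈ Finset.Icc 1 n, ((∑ j ∈ Finset.Icc 1 (n - i), θ (i + j) j * f (i + j) s * f j s)
          - ∑ j ∈ Finset.Icc 1 n, θ i j * f i s * f j s)) (Set.Ici 0) s :=
    fun s hs => HasDerivWithinAt.fun_sum fun i hi => hf i hi s hs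
  have hM₁' : ∀ s ∈ Set.Ici (0:ℝ),
      HasDerivWithinAt (fun u => ∑ i ∈ Finset.Icc 1 n, (i:ℝ) * f i u)
        (∑ i ∈ Finset.Icc 1 n, (i:ℝ) *
          ((∑ j ∈ Finset.Icc 1 (n - i), θ (i + j) j * f (i + j) s * f j s)
            - ∑ j ∈ Finset.Icc 1 n, θ i j * f i s * f j s)) (Set.Ici 0) s :=
    fun s hs => HasDerivWithinAt.fun_sum fun i hi =>
      HasDerivWithinAt.const_mul (i:ℝ) (hf i hi s hs)
  -- derivative of M₁ is nonpositive
  have key1 : ∀ s ∈ Set.Ici (0:ℝ),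
      (∑ i ∈ Finset.Icc 1 n, (i:ℝ) *
        ((∑ j ∈ Finset.Icc 1 (n - i), θ (i + j) j * f (i + j) s * f j s)
          - ∑ j ∈ Finset.Icc 1 n, θ i j * f i s * f j s)) ≤ 0 := by
    intro s hs
    simp only [mul_sub, Finset.mul_sum]
    rw [Finset.sum_sub_distrib, sub_nonpos]
    have egain : ∑ i ∈ Finset.Icc 1 n, ∑ j ∈ Finset.Icc 1 (n - i),
          (i:ℝ) * (θ (i + j) j * f (i + j) s * f j s)
        = ∑ k ∈ Finset.Icc 1 n, ∑ j ∈ Finset.Icc 1 (k - 1),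
            ((k - j : ℕ):ℝ) * (θ k j * f k s * f j s) := by
      rw [← rbk_reindex n (fun k j => ((k - j : ℕ):ℝ) * (θ k j * f k s * f j s))]
      refine Finset.sum_congr rfl fun i hi => Finset.sum_congr rfl fun j hj => ?_
      simp [Nat.add_sub_cancel]
    rw [egain]
    refine Finset.sum_le_sum fun k hk => ?_
    have hk' := Finset.mem_Icc.mp hk
    calc ∑ j ∈ Finset.Icc 1 (k - 1), ((k - j : ℕ):ℝ) * (θ k j * f k s * f j s)
        ≤ ∑ j ∈ Finset.Icc 1 (k - 1), (k:ℝ) * (θ k j * f k s * f j s) := by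
          refine Finset.sum_le_sum fun j hj => ?_
          have hj' := Finset.mem_Icc.mp hj
          have hjS : j ∈ Finset.Icc 1 n := Finset.mem_Icc.mpr ⟨hj'.1, by omega⟩
          exact mul_le_mul_of_nonneg_right (Nat.cast_le.mpr (Nat.sub_le k j))
            (hterm s hs k hk j hjS)
      _ ≤ ∑ j ∈ Finset.Icc 1 n, (k:ℝ) * (θ k j * f k s * f j s) := by
          refine Finset.sum_le_sum_of_subset_of_nonneg
            (Finset.Icc_subset_Icc_right (by omega)) ?_
          intro j hj _
          exact mul_nonneg (Nat.cast_nonneg k) (hterm s hs k hk j hj)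
  -- M₁ is antitone
  have hanti : AntitoneOn (fun u => ∑ i ∈ Finset.Icc 1 n, (i:ℝ) * f i u) (Set.Ici 0) := by
    refine antitoneOn_of_hasDerivWithinAt_nonpos (convex_Ici 0)
      (f' := fun s => ∑ i ∈ Finset.Icc 1 n, (i:ℝ) *
        ((∑ j ∈ Finset.Icc 1 (n - i), θ (i + j) j * f (i + j) s * f j s)
          - ∑ j ∈ Finset.Icc 1 n, θ i j * f i s * f j s))
      (fun s hs => (hM₁' s hs).continuousWithinAt) ?_ ?_
    · intro s hs
      rw [interior_Ici] at hs
      exact (hM₁' s (Set.mem_Ioi.mp hs).le).mono interior_subset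
    · intro s hs
      rw [interior_Ici] at hs
      exact key1 s (Set.mem_Ioi.mp hs).le
  -- derivative bound for M₀
  have key0 : ∀ s ∈ Set.Ici (0:ℝ),
      (∑ i ∈ Finset.Icc 1 n, ((∑ j ∈ Finset.Icc 1 (n - i), θ (i + j) j * f (i + j) s * f j s)
        - ∑ j ∈ Finset.Icc 1 n, θ i j * f i s * f j s))
      ≤ -(R^2/2 * (∑ i ∈ Finset.Icc 1 n, (i:ℝ) * f i s)^2) := by
    intro s hs
    rw [Finset.sum_sub_distrib]
    rw [rbk_reindex n (fun k j => θ k j * f k s * f j s)]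
    have htri := rbk_tri_half n (fun k j => θ k j * f k s * f j s)
      (fun k hk j hj => hterm s hs k hk j hj)
      (fun k hk j hj => by
        show θ k j * f k s * f j s = θ j k * f j s * f k s
        rw [hθ_symm k j (Finset.mem_Icc.mp hk).1 (Finset.mem_Icc.mp hj).1]; ring)
    have ha : R * (∑ i ∈ Finset.Icc 1 n, (i:ℝ) * f i s)
        ≤ ∑ i ∈ Finset.Icc 1 n, ω i * f i s := by
      rw [Finset.mul_sum]
      refine Finset.sum_le_sum fun i hi => ?_
      have h1 := (Finset.mem_Icc.mp hi).1
      calc R * ((i:ℝ) * f i s) = (R * i) * f i s := by ring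
        _ ≤ ω i * f i s := mul_le_mul_of_nonneg_right (hωR i h1) (hf_nonneg i hi s hs)
    have ha0 : 0 ≤ R * (∑ i ∈ Finset.Icc 1 n, (i:ℝ) * f i s) :=
      mul_nonneg hR.le (hM₁nonneg s hs)
    have hb : (∑ i ∈ Finset.Icc 1 n, ω i * f i s) * (∑ j ∈ Finset.Icc 1 n, ω j * f j s)
        ≤ ∑ i ∈ Finset.Icc 1 n, ∑ j ∈ Finset.Icc 1 n, θ i j * f i s * f j s := by
      rw [Finset.sum_mul_sum]
      refine Finset.sum_le_sum fun i hi => Finset.sum_le_sum fun j hj => ?_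
      have h1 := (Finset.mem_Icc.mp hi).1
      have h2 := (Finset.mem_Icc.mp hj).1
      rw [hK1 i j h1 h2]
      have hpos := mul_nonneg (mul_nonneg (hκ_nonneg i j h1 h2)
        (hf_nonneg i hi s hs)) (hf_nonneg j hj s hs)
      nlinarith [hpos]
    have hLge : (R * (∑ i ∈ Finset.Icc 1 n, (i:ℝ) * f i s))^2
        ≤ ∑ i ∈ Finset.Icc 1 n, ∑ j ∈ Finset.Icc 1 n, θ i j * f i s * f j s := by
      calc (R * (∑ i ∈ Finset.Icc 1 n, (i:ℝ) * f i s))^2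
          = (R * (∑ i ∈ Finset.Icc 1 n, (i:ℝ) * f i s))
            * (R * (∑ i ∈ Finset.Icc 1 n, (i:ℝ) * f i s)) := sq _
        _ ≤ (∑ i ∈ Finset.Icc 1 n, ω i * f i s) * (∑ j ∈ Finset.Icc 1 n, ω j * f j s) :=
            mul_le_mul ha ha ha0 (ha0.trans ha)
        _ ≤ _ := hb
    nlinarith [htri, hLge]
  -- comparison function φ
  set F : ℝ := ∑ i ∈ Finset.Icc 1 n, fin i with hF
  have hFnn : 0 ≤ F := Finset.sum_nonneg hfin
  set c : ℝ := R^2/2 * (∑ i ∈ Finset.Icc 1 n, (i:ℝ) * f i t)^2 with hc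
  have hcnn : 0 ≤ c := by positivity
  have hφanti : AntitoneOn (fun u => (∑ i ∈ Finset.Icc 1 n, f i u) + c * u)
      (Set.Icc 0 t) := by
    refine antitoneOn_of_hasDerivWithinAt_nonpos (convex_Icc 0 t)
      (f' := fun s => (∑ i ∈ Finset.Icc 1 n,
        ((∑ j ∈ Finset.Icc 1 (n - i), θ (i + j) j * f (i + j) s * f j s)
          - ∑ j ∈ Finset.Icc 1 n, θ i j * f i s * f j s)) + c) ?_ ?_ ?_
    · intro s hs
      exact ((hM₀' s hs.1).continuousWithinAt.mono Set.Icc_subset_Ici_self).add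
        ((continuous_const.mul continuous_id).continuousWithinAt)
    · intro s hs
      rw [interior_Icc] at hs
      have h1 : HasDerivWithinAt (fun u => ∑ i ∈ Finset.Icc 1 n, f i u)
          (∑ i ∈ Finset.Icc 1 n, ((∑ j ∈ Finset.Icc 1 (n - i), θ (i + j) j * f (i + j) s * f j s)
            - ∑ j ∈ Finset.Icc 1 n, θ i j * f i s * f j s)) (interior (Set.Icc 0 t)) s := by
        rw [interior_Icc]
        exact (hM₀' s hs.1.le).mono (Set.Ioo_subset_Icc_self.trans Set.Icc_subset_Ici_self)
      have h2 : HasDerivWithinAt (fun u : ℝ => c * u) c (interior (Set.Icc 0 t)) s := by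
        simpa using (hasDerivWithinAt_id s (interior (Set.Icc 0 t))).const_mul c
      exact h1.add h2
    · intro s hs
      rw [interior_Icc] at hs
      have h3 := key0 s hs.1.le
      have h4 : (∑ i ∈ Finset.Icc 1 n, (i:ℝ) * f i t)
          ≤ ∑ i ∈ Finset.Icc 1 n, (i:ℝ) * f i s :=
        hanti hs.1.le (hs.1.le.trans hs.2.le) hs.2.le
      have h5 : 0 ≤ ∑ i ∈ Finset.Icc 1 n, (i:ℝ) * f i t := hM₁nonneg t ht.le
      have h6 : (∑ i ∈ Finset.Icc 1 n, (i:ℝ) * f i t)^2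
          ≤ (∑ i ∈ Finset.Icc 1 n, (i:ℝ) * f i s)^2 := by nlinarith
      rw [hc]
      nlinarith [h3, h6, sq_nonneg R]
  have hφ := hφanti (Set.left_mem_Icc.mpr ht.le) (Set.right_mem_Icc.mpr ht.le) ht.le
  simp only [mul_zero, add_zero] at hφ
  have hM₀0 : (∑ i ∈ Finset.Icc 1 n, f i 0) = F :=
    Finset.sum_congr rfl fun i hi => hinit i hi
  have hM₀t : 0 ≤ ∑ i ∈ Finset.Icc 1 n, f i t :=
    Finset.sum_nonneg fun i hi => hf_nonneg i hi t ht.le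
  have h5 : c * t ≤ F := by
    rw [← hM₀0]
    linarith [hφ]
  -- conclude
  have hR2 : (0:ℝ) < R^2 := by positivity
  have hst : (0:ℝ) < Real.sqrt t := Real.sqrt_pos.mpr ht
  have hrhsnn : 0 ≤ (2 / R) * Real.sqrt F * (Real.sqrt t)⁻¹ := by positivity
  have hsqF : Real.sqrt F ^ 2 = F := Real.sq_sqrt hFnn
  have hsqt : Real.sqrt t ^ 2 = t := Real.sq_sqrt ht.le
  have hkey : (∑ i ∈ Finset.Icc 1 n, (i:ℝ) * f i t)^2
      ≤ ((2 / R) * Real.sqrt F * (Real.sqrt t)⁻¹)^2 := by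
    have hrhs2 : ((2 / R) * Real.sqrt F * (Real.sqrt t)⁻¹)^2 = 4 / R^2 * F * t⁻¹ := by
      rw [mul_pow, mul_pow, div_pow, inv_pow, hsqF, hsqt]
      norm_num
    rw [hrhs2, show (4:ℝ) / R^2 * F * t⁻¹ = (4 * F / R^2) / t by ring]
    rw [le_div_iff₀ ht, le_div_iff₀ hR2]
    rw [hc] at h5
    nlinarith [h5, hFnn]
  calc ∑ i ∈ Finset.Icc 1 n, (i:ℝ) * f i t
      = Real.sqrt ((∑ i ∈ Finset.Icc 1 n, (i:ℝ) * f i t)^2) :=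
        (Real.sqrt_sq (hM₁nonneg t ht.le)).symm
    _ ≤ Real.sqrt (((2 / R) * Real.sqrt F * (Real.sqrt t)⁻¹)^2) := Real.sqrt_le_sqrt hkey
    _ = (2 / R) * Real.sqrt F * (Real.sqrt t)⁻¹ := Real.sqrt_sq hrhsnn
end

section
/- Let (θ_{i,j})_{i,j≥1} be a coagulation kernel satisfying (K1). Let f^{in} ∈ X_1^+, let (n_k) be a sequence of integers with n_k → ∞, and for each k let f^{n_k} be the nonnegative global solution of the truncated RBK system of size n_k with initial data f_i^{n_k}(0) = f_i^{in} for 1 ≤ i ≤ n_k. Suppose that for each i ≥ 1 and each t ≥ 0, f_i^{n_k}(t) → f_i(t) as k → ∞ for some functions f_i : [0,∞) → [0,∞). Then for every T ∈ (0,∞) and every r ≥ 1, ∫_0^T ( Σ_{j=r}^{∞} ω_j f_j(s) )^2 ds ≤ 2 r^{−1/2} ‖f^{in}‖_1; in particular Σ_{j=r}^{∞} ω_j f_j ∈ L^2(0,T). -/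
open MeasureTheory Finset Filter

lemma rbk_sq_iSup_of_monotone (u : ℕ → ENNReal) (hu : Monotone u) :
    (⨆ n, u n) ^ 2 = ⨆ n, (u n) ^ 2 := by
  apply le_antisymm
  · rw [sq, ENNReal.iSup_mul]
    refine iSup_le fun m => ?_
    rw [ENNReal.mul_iSup]
    refine iSup_le fun n => ?_
    refine le_iSup_of_le (max m n) ?_
    rw [sq]
    exact mul_le_mul' (hu (le_max_left m n)) (hu (le_max_right m n))
  · exact iSup_le fun n => pow_le_pow_left' (le_iSup u n) 2

lemma rbk_real_sqrt_le_self {a : ℝ} (h : 1 ≤ a) : Real.sqrt a ≤ a := by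
  have h0 : (0:ℝ) ≤ a := by linarith
  calc Real.sqrt a ≤ Real.sqrt (a ^ 2) := Real.sqrt_le_sqrt (by nlinarith)
    _ = a := by rw [Real.sqrt_sq h0]

lemma rbk_sum_identity (θ : ℕ → ℕ → ℝ) (x : ℕ → ℝ) (n : ℕ) :
    ∑ i ∈ Icc 1 n, (i : ℝ) * ((∑ j ∈ Icc 1 (n - i), θ (i + j) j * x (i + j) * x j)
        - ∑ j ∈ Icc 1 n, θ i j * x i * x j)
      = -∑ p ∈ Icc 1 n ×ˢ Icc 1 n,
          ((min p.1 p.2 : ℕ) : ℝ) * θ p.1 p.2 * x p.1 * x p.2 := by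
  classical
  have hG : ∑ i ∈ Icc 1 n, (i : ℝ) * ∑ j ∈ Icc 1 (n - i), θ (i + j) j * x (i + j) * x j
      = ∑ p ∈ (Icc 1 n ×ˢ Icc 1 n).filter (fun p => p.2 < p.1),
          ((p.1 - p.2 : ℕ) : ℝ) * θ p.1 p.2 * x p.1 * x p.2 := by
    simp_rw [Finset.mul_sum]
    rw [Finset.sum_sigma']
    refine Finset.sum_nbij' (fun a => (a.1 + a.2, a.2)) (fun p => ⟨p.1 - p.2, p.2⟩)
      ?_ ?_ ?_ ?_ ?_
    · rintro ⟨i, j⟩ h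
      simp only [Finset.mem_sigma, Finset.mem_Icc] at h
      simp only [Finset.mem_filter, Finset.mem_product, Finset.mem_Icc]
      omega
    · rintro ⟨a, b⟩ h
      simp only [Finset.mem_filter, Finset.mem_product, Finset.mem_Icc] at h
      simp only [Finset.mem_sigma, Finset.mem_Icc]
      omega
    · rintro ⟨i, j⟩ h
      simp only [Finset.mem_sigma, Finset.mem_Icc] at h
      simp only [Sigma.mk.inj_iff]
      exact ⟨by omega, HEq.rfl⟩
    · rintro ⟨a, b⟩ h
      simp only [Finset.mem_filter, Finset.mem_product, Finset.mem_Icc] at h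
      simp only [Prod.mk.injEq]
      exact ⟨by omega, trivial⟩
    · rintro ⟨i, j⟩ h
      simp only [Finset.mem_sigma, Finset.mem_Icc] at h
      have : i + j - j = i := by omega
      simp only [this]
      ring
  have hL : ∑ i ∈ Icc 1 n, (i : ℝ) * ∑ j ∈ Icc 1 n, θ i j * x i * x j
      = ∑ p ∈ Icc 1 n ×ˢ Icc 1 n, (p.1 : ℝ) * (θ p.1 p.2 * x p.1 * x p.2) := by
    rw [Finset.sum_product]
    simp_rw [Finset.mul_sum]
  simp_rw [mul_sub]
  rw [Finset.sum_sub_distrib, hG, hL]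
  rw [← Finset.sum_filter_add_sum_filter_not (Icc 1 n ×ˢ Icc 1 n) (fun p => p.2 < p.1)
      (fun p => (p.1 : ℝ) * (θ p.1 p.2 * x p.1 * x p.2)),
    ← Finset.sum_filter_add_sum_filter_not (Icc 1 n ×ˢ Icc 1 n) (fun p => p.2 < p.1)
      (fun p => ((min p.1 p.2 : ℕ) : ℝ) * θ p.1 p.2 * x p.1 * x p.2)]
  have h1 : ∑ p ∈ (Icc 1 n ×ˢ Icc 1 n).filter (fun p => p.2 < p.1),
      ((p.1 - p.2 : ℕ) : ℝ) * θ p.1 p.2 * x p.1 * x p.2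
      = ∑ p ∈ (Icc 1 n ×ˢ Icc 1 n).filter (fun p => p.2 < p.1),
        ((p.1 : ℝ) * (θ p.1 p.2 * x p.1 * x p.2)
          - ((min p.1 p.2 : ℕ) : ℝ) * θ p.1 p.2 * x p.1 * x p.2) := by
    refine Finset.sum_congr rfl ?_
    rintro ⟨a, b⟩ h
    simp only [Finset.mem_filter, Finset.mem_product, Finset.mem_Icc] at h
    have hba : b ≤ a := le_of_lt h.2
    rw [Nat.cast_sub hba, min_eq_right hba]
    ring
  have h2 : ∀ p ∈ (Icc 1 n ×ˢ Icc 1 n).filter (fun p => ¬ p.2 < p.1),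
      ((min p.1 p.2 : ℕ) : ℝ) * θ p.1 p.2 * x p.1 * x p.2
      = (p.1 : ℝ) * (θ p.1 p.2 * x p.1 * x p.2) := by
    rintro ⟨a, b⟩ h
    simp only [Finset.mem_filter, Finset.mem_product, Finset.mem_Icc] at h
    have : min a b = a := min_eq_left (le_of_not_gt h.2)
    rw [this]; ring
  rw [h1, Finset.sum_sub_distrib, Finset.sum_congr rfl h2]
  ring


lemma rbk_trunc_integral_bound
    (θ : ℕ → ℕ → ℝ) (ω : ℕ → ℝ) (κ : ℕ → ℕ → ℝ)
    (hK1 : ∀ i j : ℕ, 1 ≤ i → 1 ≤ j → θ i j = ω i * ω j + κ i j)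
    (hω_nonneg : ∀ i : ℕ, 1 ≤ i → 0 ≤ ω i)
    (hκ_nonneg : ∀ i j : ℕ, 1 ≤ i → 1 ≤ j → 0 ≤ κ i j)
    (n : ℕ) (g : ℕ → ℝ → ℝ)
    (hg : IsTruncRBKOn θ n (Set.Ici 0) g)
    (hg_nonneg : ∀ i ∈ Finset.Icc 1 n, ∀ t ∈ Set.Ici (0:ℝ), 0 ≤ g i t)
    (T : ℝ) (hT : 0 < T) (r : ℕ) (hr : 1 ≤ r) :
    ∫ s in (0:ℝ)..T, (∑ j ∈ Finset.Icc r n, ω j * g j s) ^ 2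
      ≤ (∑ i ∈ Finset.Icc 1 n, (i : ℝ) * g i 0) / r := by
  classical
  have hrpos : (0:ℝ) < r := by exact_mod_cast hr
  -- continuity of the g i, i in range
  have hcont : ∀ m ∈ Finset.Icc 1 n, ContinuousOn (g m) (Set.Ici 0) := by
    intro m hm t ht
    exact (hg m hm t ht).continuousWithinAt
  set D : ℕ → ℝ → ℝ := fun i t =>
    (∑ j ∈ Finset.Icc 1 (n - i), θ (i + j) j * g (i + j) t * g j t)
      - ∑ j ∈ Finset.Icc 1 n, θ i j * g i t * g j t with hD
  set Dtot : ℝ → ℝ := fun t => ∑ i ∈ Finset.Icc 1 n, (i : ℝ) * D i t with hDtot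
  set φ : ℝ → ℝ := fun t => ∑ i ∈ Finset.Icc 1 n, (i : ℝ) * g i t with hφdef
  have hφ : ∀ t ∈ Set.Ici (0:ℝ), HasDerivWithinAt φ (Dtot t) (Set.Ici 0) t := by
    intro t ht
    exact HasDerivWithinAt.fun_sum fun i hi => (hg i hi t ht).const_mul (i : ℝ)
  have hDcont : ContinuousOn Dtot (Set.Ici 0) := by
    apply continuousOn_finset_sum _
    intro i hi
    apply ContinuousOn.mul continuousOn_const
    apply ContinuousOn.sub
    · apply continuousOn_finset_sum _
      intro j hj
      simp only [Finset.mem_Icc] at hi hj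
      have h1 : i + j ∈ Finset.Icc 1 n := by simp only [Finset.mem_Icc]; omega
      have h2 : j ∈ Finset.Icc 1 n := by simp only [Finset.mem_Icc]; omega
      exact (continuousOn_const.mul (hcont _ h1)).mul (hcont _ h2)
    · apply continuousOn_finset_sum _
      intro j hj
      exact (continuousOn_const.mul (hcont _ hi)).mul (hcont _ hj)
  have hφcont : ContinuousOn φ (Set.Ici 0) := by
    apply continuousOn_finset_sum _
    intro i hi
    exact continuousOn_const.mul (hcont _ hi)
  -- FTC
  have hIccIci : Set.Icc (0:ℝ) T ⊆ Set.Ici 0 := fun s hs => hs.1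
  have hFTC : ∫ s in (0:ℝ)..T, Dtot s = φ T - φ 0 := by
    apply intervalIntegral.integral_eq_sub_of_hasDeriv_right_of_le hT.le
      (hφcont.mono hIccIci)
    · intro s hs
      exact ((hφ s (le_of_lt hs.1)).mono (Set.Ioi_subset_Ici hs.1.le))
    · exact (hDcont.mono (by rw [Set.uIcc_of_le hT.le]; exact hIccIci)).intervalIntegrable
  -- pointwise bound
  have hpt : ∀ s ∈ Set.Icc (0:ℝ) T,
      (r:ℝ) * (∑ j ∈ Finset.Icc r n, ω j * g j s) ^ 2 ≤ -Dtot s := by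
    intro s hs
    have hs0 : s ∈ Set.Ici (0:ℝ) := hs.1
    have hx : ∀ m ∈ Finset.Icc 1 n, 0 ≤ g m s := fun m hm => hg_nonneg m hm s hs0
    have hid : Dtot s = -∑ p ∈ Finset.Icc 1 n ×ˢ Finset.Icc 1 n,
        ((min p.1 p.2 : ℕ) : ℝ) * θ p.1 p.2 * g p.1 s * g p.2 s :=
      rbk_sum_identity θ (fun m => g m s) n
    rw [hid, neg_neg]
    have step1 : (r:ℝ) * (∑ j ∈ Finset.Icc r n, ω j * g j s) ^ 2
        = ∑ p ∈ Finset.Icc r n ×ˢ Finset.Icc r n,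
            (r:ℝ) * ((ω p.1 * g p.1 s) * (ω p.2 * g p.2 s)) := by
      rw [sq, Finset.sum_mul_sum, ← Finset.sum_product', Finset.mul_sum]
    rw [step1]
    have hsub : Finset.Icc r n ×ˢ Finset.Icc r n ⊆ Finset.Icc 1 n ×ˢ Finset.Icc 1 n := by
      apply Finset.product_subset_product <;>
        · apply Finset.Icc_subset_Icc_left; omega
    refine le_trans (Finset.sum_le_sum ?_) (Finset.sum_le_sum_of_subset_of_nonneg hsub ?_)
    · rintro ⟨a, b⟩ hp
      simp only [Finset.mem_product, Finset.mem_Icc] at hp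
      have ha1 : 1 ≤ a := le_trans hr hp.1.1
      have hb1 : 1 ≤ b := le_trans hr hp.2.1
      have hga : 0 ≤ g a s := hx a (by simp only [Finset.mem_Icc]; omega)
      have hgb : 0 ≤ g b s := hx b (by simp only [Finset.mem_Icc]; omega)
      have hθge : ω a * ω b ≤ θ a b := by
        rw [hK1 a b ha1 hb1]
        have := hκ_nonneg a b ha1 hb1
        linarith
      have hrmin : (r:ℝ) ≤ ((min a b : ℕ) : ℝ) := by
        have : r ≤ min a b := le_min hp.1.1 hp.2.1
        exact_mod_cast this
      have hωa := hω_nonneg a ha1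
      have hωb := hω_nonneg b hb1
      calc (r:ℝ) * ((ω a * g a s) * (ω b * g b s))
          = (r:ℝ) * (ω a * ω b) * g a s * g b s := by ring
        _ ≤ ((min a b : ℕ) : ℝ) * θ a b * g a s * g b s := by
            apply mul_le_mul_of_nonneg_right _ hgb
            apply mul_le_mul_of_nonneg_right _ hga
            apply mul_le_mul hrmin hθge (by positivity) (by positivity)
    · rintro ⟨a, b⟩ hp _
      simp only [Finset.mem_product, Finset.mem_Icc] at hp
      have ha1 : 1 ≤ a := hp.1.1
      have hb1 : 1 ≤ b := hp.2.1
      have hga : 0 ≤ g a s := hx a (by simp only [Finset.mem_Icc]; omega)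
      have hgb : 0 ≤ g b s := hx b (by simp only [Finset.mem_Icc]; omega)
      have hθ : 0 ≤ θ a b := by
        rw [hK1 a b ha1 hb1]
        have := hκ_nonneg a b ha1 hb1
        have := hω_nonneg a ha1
        have := hω_nonneg b hb1
        positivity
      positivity
  -- integrability
  have htailcont : ContinuousOn (fun s => (∑ j ∈ Finset.Icc r n, ω j * g j s) ^ 2)
      (Set.Icc 0 T) := by
    apply ContinuousOn.pow
    apply continuousOn_finset_sum _
    intro j hj
    simp only [Finset.mem_Icc] at hj
    exact continuousOn_const.mul
      ((hcont j (by simp only [Finset.mem_Icc]; omega)).mono hIccIci)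
  have hint1 : IntervalIntegrable
      (fun s => (r:ℝ) * (∑ j ∈ Finset.Icc r n, ω j * g j s) ^ 2) volume 0 T := by
    apply ContinuousOn.intervalIntegrable
    rw [Set.uIcc_of_le hT.le]
    exact continuousOn_const.mul htailcont
  have hint2 : IntervalIntegrable (fun s => -Dtot s) volume 0 T := by
    apply ContinuousOn.intervalIntegrable
    rw [Set.uIcc_of_le hT.le]
    exact (hDcont.mono hIccIci).neg
  have hmono : ∫ s in (0:ℝ)..T, (r:ℝ) * (∑ j ∈ Finset.Icc r n, ω j * g j s) ^ 2
      ≤ ∫ s in (0:ℝ)..T, -Dtot s :=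
    intervalIntegral.integral_mono_on hT.le hint1 hint2 hpt
  have hnegint : ∫ s in (0:ℝ)..T, -Dtot s = φ 0 - φ T := by
    rw [intervalIntegral.integral_neg, hFTC]; ring
  have hφT : 0 ≤ φ T := by
    apply Finset.sum_nonneg
    intro i hi
    exact mul_nonneg (Nat.cast_nonneg i) (hg_nonneg i hi T (le_of_lt hT))
  have hconst : ∫ s in (0:ℝ)..T, (r:ℝ) * (∑ j ∈ Finset.Icc r n, ω j * g j s) ^ 2
      = (r:ℝ) * ∫ s in (0:ℝ)..T, (∑ j ∈ Finset.Icc r n, ω j * g j s) ^ 2 :=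
    intervalIntegral.integral_const_mul _ _
  rw [hconst, hnegint] at hmono
  rw [le_div_iff₀ hrpos, mul_comm]
  linarith

/-- Under (K1), for `f^{in} ∈ X₁⁺` and a sequence of truncated solutions
`f^{n_k}` (with `n_k → ∞`) converging pointwise to some nonnegative `f`, for every
`T > 0` and `r ≥ 1`, `∫_0^T (∑_{j≥r} ω_j f_j(s))² ds ≤ 2 r^{−1/2} ‖f^{in}‖₁`;
in particular `∑_{j≥r} ω_j f_j ∈ L²(0,T)`. -/
theorem truncRBK_omega_tail_L2
    (θ : ℕ → ℕ → ℝ) (ω : ℕ → ℝ) (κ : ℕ → ℕ → ℝ)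
    (hθ_symm : ∀ i j : ℕ, 1 ≤ i → 1 ≤ j → θ i j = θ j i)
    -- (K1)
    (hK1 : ∀ i j : ℕ, 1 ≤ i → 1 ≤ j → θ i j = ω i * ω j + κ i j)
    (hω_nonneg : ∀ i : ℕ, 1 ≤ i → 0 ≤ ω i)
    (hκ_nonneg : ∀ i j : ℕ, 1 ≤ i → 1 ≤ j → 0 ≤ κ i j)
    (hκ_symm : ∀ i j : ℕ, 1 ≤ i → 1 ≤ j → κ i j = κ j i)
    -- f^{in} ∈ X₁⁺
    (fin : ℕ → ℝ) (hfin_nonneg : ∀ i : ℕ, 1 ≤ i → 0 ≤ fin i)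
    (hfin_summable : Summable (fun i : ℕ => (i : ℝ) * fin i))
    -- the sequence of truncated solutions
    (nk : ℕ → ℕ) (hnk : Tendsto nk atTop atTop)
    (F : ℕ → ℕ → ℝ → ℝ)
    (hF : ∀ k : ℕ, IsTruncRBKOn θ (nk k) (Set.Ici 0) (F k))
    (hFinit : ∀ k : ℕ, ∀ i ∈ Finset.Icc 1 (nk k), F k i 0 = fin i)
    (hF_nonneg : ∀ k : ℕ, ∀ i ∈ Finset.Icc 1 (nk k), ∀ t ∈ Set.Ici (0:ℝ), 0 ≤ F k i t)
    -- pointwise convergence to a nonnegative limit f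
    (f : ℕ → ℝ → ℝ)
    (hf_nonneg : ∀ i : ℕ, 1 ≤ i → ∀ t ∈ Set.Ici (0:ℝ), 0 ≤ f i t)
    (hconv : ∀ i : ℕ, 1 ≤ i → ∀ t ∈ Set.Ici (0:ℝ),
      Tendsto (fun k => F k i t) atTop (nhds (f i t)))
    (T : ℝ) (hT : 0 < T) (r : ℕ) (hr : 1 ≤ r) :
    IntervalIntegrable
        (fun s => (∑' j : ℕ, if r ≤ j then ω j * f j s else 0) ^ 2)
        MeasureTheory.volume 0 T
    ∧ ∫ s in (0:ℝ)..T, (∑' j : ℕ, if r ≤ j then ω j * f j s else 0) ^ 2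
        ≤ 2 * (Real.sqrt r)⁻¹ * ∑' j : ℕ, (j : ℝ) * fin j := by
  classical
  have hrpos : (0:ℝ) < r := by exact_mod_cast hr
  set B : ℝ := ∑' j : ℕ, (j : ℝ) * fin j with hBdef
  have hterm_nonneg : ∀ j : ℕ, 0 ≤ (j:ℝ) * fin j := by
    intro j
    rcases Nat.eq_zero_or_pos j with h | h
    · simp [h]
    · exact mul_nonneg (Nat.cast_nonneg j) (hfin_nonneg j h)
  have hB0 : 0 ≤ B := tsum_nonneg hterm_nonneg
  -- the tail sums of the truncated solutions
  set tail : ℕ → ℝ → ℝ := fun k s => ∑ j ∈ Finset.Icc r (nk k), ω j * F k j s with htaildef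
  -- uniform integral bound from the truncated estimate
  have hbk : ∀ k, ∫ s in (0:ℝ)..T, (tail k s) ^ 2 ≤ B / r := by
    intro k
    have h1 := rbk_trunc_integral_bound θ ω κ hK1 hω_nonneg hκ_nonneg (nk k) (F k)
      (hF k) (hF_nonneg k) T hT r hr
    refine h1.trans ?_
    rw [div_le_div_iff_of_pos_right hrpos]
    have heq : ∑ i ∈ Finset.Icc 1 (nk k), (i:ℝ) * F k i 0
        = ∑ i ∈ Finset.Icc 1 (nk k), (i:ℝ) * fin i :=
      Finset.sum_congr rfl (fun i hi => by rw [hFinit k i hi])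
    rw [heq]
    exact Summable.sum_le_tsum _ (fun i _ => hterm_nonneg i) hfin_summable
  -- continuity of the truncated solutions
  have hFc : ∀ k, ∀ j ∈ Finset.Icc 1 (nk k), ContinuousOn (F k j) (Set.Ici 0) :=
    fun k j hj t ht => (hF k j hj t ht).continuousWithinAt
  have htailc : ∀ k, ContinuousOn (tail k) (Set.Ici 0) := by
    intro k
    apply continuousOn_finset_sum _
    intro j hj
    simp only [Finset.mem_Icc] at hj
    exact continuousOn_const.mul (hFc k j (by simp only [Finset.mem_Icc]; omega))
  set μ : Measure ℝ := volume.restrict (Set.Ioc 0 T) with hμdef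
  have hIocIci : Set.Ioc (0:ℝ) T ⊆ Set.Ici 0 := fun s hs => le_of_lt hs.1
  have hIocIcc : Set.Ioc (0:ℝ) T ⊆ Set.Icc 0 T := Set.Ioc_subset_Icc_self
  have hIccIci : Set.Icc (0:ℝ) T ⊆ Set.Ici 0 := fun s hs => hs.1
  have hae_mem : ∀ᵐ s ∂μ, s ∈ Set.Ioc (0:ℝ) T := ae_restrict_mem measurableSet_Ioc
  set gk : ℕ → ℝ → ENNReal := fun k s => ENNReal.ofReal ((tail k s) ^ 2) with hgkdef
  have hgkaem : ∀ k, AEMeasurable (gk k) μ := by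
    intro k
    have hco : ContinuousOn (gk k) (Set.Ioc 0 T) :=
      ENNReal.continuous_ofReal.comp_continuousOn (((htailc k).mono hIocIci).pow 2)
    exact hco.aemeasurable measurableSet_Ioc
  have hgkint : ∀ k, ∫⁻ s, gk k s ∂μ ≤ ENNReal.ofReal (B / r) := by
    intro k
    have hInt : Integrable (fun s => (tail k s) ^ 2) μ := by
      have h1 : IntegrableOn (fun s => (tail k s) ^ 2) (Set.Icc 0 T) volume :=
        (((htailc k).mono hIccIci).pow 2).integrableOn_Icc
      exact h1.mono_set hIocIcc
    have h2 := MeasureTheory.ofReal_integral_eq_lintegral_ofReal hInt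
      (Eventually.of_forall fun s => sq_nonneg _)
    rw [← h2]
    apply ENNReal.ofReal_le_ofReal
    rw [← intervalIntegral.integral_of_le hT.le]
    exact hbk k
  -- a.e. measurability of the limit functions
  have hfaem : ∀ j : ℕ, 1 ≤ j → AEMeasurable (f j) μ := by
    intro j hj
    obtain ⟨k0, hk0⟩ := eventually_atTop.mp (hnk.eventually_ge_atTop j)
    apply aemeasurable_of_tendsto_metrizable_ae atTop
      (f := fun m => F (m + k0) j)
    · intro m
      have hmem : j ∈ Finset.Icc 1 (nk (m + k0)) := by
        simp only [Finset.mem_Icc]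
        exact ⟨hj, hk0 (m + k0) (Nat.le_add_left k0 m)⟩
      exact (((hFc (m + k0) j hmem).mono hIocIci).aemeasurable measurableSet_Ioc)
    · filter_upwards [hae_mem] with s hs
      exact (hconv j hj s (hIocIci hs)).comp (tendsto_add_atTop_nat k0)
  set e : ℕ → ℝ → ENNReal :=
    fun j s => ENNReal.ofReal (if r ≤ j then ω j * f j s else 0) with hedef
  have heaem : ∀ j, AEMeasurable (e j) μ := by
    intro j
    by_cases hj : r ≤ j
    · simp only [hedef, if_pos hj]
      exact ENNReal.measurable_ofReal.comp_aemeasurable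
        (aemeasurable_const.mul (hfaem j (le_trans hr hj)))
    · simp only [hedef, if_neg hj]
      exact aemeasurable_const
  have hSaem : ∀ m, AEMeasurable (fun s => ∑ j ∈ Finset.range m, e j s) μ :=
    fun m => Finset.aemeasurable_fun_sum _ (fun j _ => heaem j)
  -- the key estimate for finite partial sums, via Fatou
  have claim1 : ∀ m, ∫⁻ s, (∑ j ∈ Finset.range m, e j s) ^ 2 ∂μ
      ≤ ENNReal.ofReal (B / r) := by
    intro m
    set A : Finset ℕ := (Finset.range m).filter (fun j => r ≤ j) with hAdef
    have hAr : ∀ j ∈ A, r ≤ j := by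
      intro j hj
      simp only [hAdef, Finset.mem_filter] at hj
      exact hj.2
    have hptw : ∀ᵐ s ∂μ, (∑ j ∈ Finset.range m, e j s) ^ 2
        ≤ liminf (fun k => gk k s) atTop := by
      filter_upwards [hae_mem] with s hs
      have hs0 : s ∈ Set.Ici (0:ℝ) := hIocIci hs
      have hA : ∀ j ∈ A, 0 ≤ ω j * f j s := fun j hj =>
        mul_nonneg (hω_nonneg j (le_trans hr (hAr j hj)))
          (hf_nonneg j (le_trans hr (hAr j hj)) s hs0)
      have e_eq : (∑ j ∈ Finset.range m, e j s)
          = ENNReal.ofReal (∑ j ∈ A, ω j * f j s) := by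
        rw [ENNReal.ofReal_sum_of_nonneg hA, hAdef, Finset.sum_filter]
        refine Finset.sum_congr rfl fun j _ => ?_
        by_cases hj : r ≤ j <;> simp [hedef, hj]
      rw [e_eq, ← ENNReal.ofReal_pow (Finset.sum_nonneg hA)]
      set q : ℕ → ℝ := fun k => ∑ j ∈ A, ω j * F k j s with hqdef
      have hqtend : Tendsto q atTop (nhds (∑ j ∈ A, ω j * f j s)) :=
        tendsto_finset_sum _ fun j hj =>
          ((hconv j (le_trans hr (hAr j hj)) s hs0).const_mul (ω j))
      have htendsq : Tendsto (fun k => ENNReal.ofReal ((q k) ^ 2)) atTop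
          (nhds (ENNReal.ofReal ((∑ j ∈ A, ω j * f j s) ^ 2))) :=
        (ENNReal.continuous_ofReal.tendsto _).comp (hqtend.pow 2)
      have hev : ∀ᶠ k in atTop, ENNReal.ofReal ((q k) ^ 2) ≤ gk k s := by
        filter_upwards [hnk.eventually_ge_atTop m] with k hk
        have hAsub : A ⊆ Finset.Icc r (nk k) := by
          intro j hj
          simp only [hAdef, Finset.mem_filter, Finset.mem_range] at hj
          simp only [Finset.mem_Icc]
          omega
        have hFnn : ∀ j ∈ Finset.Icc r (nk k), 0 ≤ ω j * F k j s := by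
          intro j hj
          simp only [Finset.mem_Icc] at hj
          refine mul_nonneg (hω_nonneg j (le_trans hr hj.1)) ?_
          exact hF_nonneg k j (by simp only [Finset.mem_Icc]; omega) s hs0
        have hq_le : q k ≤ tail k s :=
          Finset.sum_le_sum_of_subset_of_nonneg hAsub (fun j hj _ => hFnn j hj)
        have hq0 : 0 ≤ q k :=
          Finset.sum_nonneg fun j hj => hFnn j (hAsub hj)
        exact ENNReal.ofReal_le_ofReal (pow_le_pow_left₀ hq0 hq_le 2)
      calc ENNReal.ofReal ((∑ j ∈ A, ω j * f j s) ^ 2)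
          = liminf (fun k => ENNReal.ofReal ((q k) ^ 2)) atTop :=
            (htendsq.liminf_eq).symm
        _ ≤ liminf (fun k => gk k s) atTop := liminf_le_liminf hev
    calc ∫⁻ s, (∑ j ∈ Finset.range m, e j s) ^ 2 ∂μ
        ≤ ∫⁻ s, liminf (fun k => gk k s) atTop ∂μ := lintegral_mono_ae hptw
      _ ≤ liminf (fun k => ∫⁻ s, gk k s ∂μ) atTop := lintegral_liminf_le' hgkaem
      _ ≤ liminf (fun _ : ℕ => ENNReal.ofReal (B / r)) atTop :=
          liminf_le_liminf (Eventually.of_forall hgkint)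
      _ = ENNReal.ofReal (B / r) := liminf_const _
  -- pass to the supremum / tsum
  set Q : ℝ → ENNReal := fun s => ∑' j, e j s with hQdef
  have hQsup : ∀ s, Q s = ⨆ m, ∑ j ∈ Finset.range m, e j s :=
    fun s => ENNReal.tsum_eq_iSup_nat
  have hSmono : ∀ s, Monotone (fun m => ∑ j ∈ Finset.range m, e j s) :=
    fun s a b hab => Finset.sum_le_sum_of_subset (Finset.range_subset_range.mpr hab)
  have hQ2 : ∀ s, (Q s) ^ 2 = ⨆ m, (∑ j ∈ Finset.range m, e j s) ^ 2 := by
    intro s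
    rw [hQsup s]
    exact rbk_sq_iSup_of_monotone _ (hSmono s)
  have hQaem : AEMeasurable Q μ := by
    have : Q = fun s => ⨆ m, ∑ j ∈ Finset.range m, e j s := funext hQsup
    rw [this]
    exact AEMeasurable.iSup hSaem
  have hlint : ∫⁻ s, (Q s) ^ 2 ∂μ ≤ ENNReal.ofReal (B / r) := by
    have heq : ∫⁻ s, (Q s) ^ 2 ∂μ
        = ⨆ m, ∫⁻ s, (∑ j ∈ Finset.range m, e j s) ^ 2 ∂μ := by
      rw [show (fun s => (Q s) ^ 2)
          = fun s => ⨆ m, (∑ j ∈ Finset.range m, e j s) ^ 2 from funext hQ2]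
      exact lintegral_iSup' (fun m => (hSaem m).pow_const 2)
        (Eventually.of_forall fun s a b hab => pow_le_pow_left' (hSmono s hab) 2)
    rw [heq]
    exact iSup_le claim1
  have hne_top : ∫⁻ s, (Q s) ^ 2 ∂μ ≠ ⊤ :=
    ne_top_of_le_ne_top ENNReal.ofReal_ne_top hlint
  have hQfin : ∀ᵐ s ∂μ, (Q s) ^ 2 < ⊤ := ae_lt_top' (hQaem.pow_const 2) hne_top
  -- identification of the real tail with Q
  have key : ∀ᵐ s ∂μ,
      ENNReal.ofReal ((∑' j : ℕ, if r ≤ j then ω j * f j s else 0) ^ 2)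
        = (Q s) ^ 2 := by
    filter_upwards [hae_mem, hQfin] with s hs hfin2
    have hs0 : s ∈ Set.Ici (0:ℝ) := hIocIci hs
    set w : ℕ → ℝ := fun j => if r ≤ j then ω j * f j s else 0 with hwdef
    have hw0 : ∀ j, 0 ≤ w j := by
      intro j
      by_cases hj : r ≤ j
      · simp only [hwdef, if_pos hj]
        exact mul_nonneg (hω_nonneg j (le_trans hr hj))
          (hf_nonneg j (le_trans hr hj) s hs0)
      · simp [hwdef, hj]
    have hQne : Q s ≠ ⊤ := by
      intro hcontra
      rw [hcontra] at hfin2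
      simp [pow_two] at hfin2
    have hsum : Summable w := by
      apply summable_of_sum_range_le hw0
      intro m
      have h1 : ENNReal.ofReal (∑ j ∈ Finset.range m, w j)
          = ∑ j ∈ Finset.range m, e j s :=
        ENNReal.ofReal_sum_of_nonneg (fun j _ => hw0 j)
      have h2 : (∑ j ∈ Finset.range m, e j s) ≤ Q s := ENNReal.sum_le_tsum _
      rw [← h1] at h2
      exact (ENNReal.ofReal_le_iff_le_toReal hQne).mp h2
    have hofR : ENNReal.ofReal (∑' j, w j) = Q s :=
      ENNReal.ofReal_tsum_of_nonneg hw0 hsum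
    rw [ENNReal.ofReal_pow (tsum_nonneg hw0), hofR]
  have htoReal_eq : (fun s => (∑' j : ℕ, if r ≤ j then ω j * f j s else 0) ^ 2)
      =ᵐ[μ] fun s => ((Q s) ^ 2).toReal := by
    filter_upwards [key, hQfin] with s h1 h2
    rw [← h1, ENNReal.toReal_ofReal (sq_nonneg _)]
  have hInt : Integrable
      (fun s => (∑' j : ℕ, if r ≤ j then ω j * f j s else 0) ^ 2) μ :=
    (integrable_toReal_of_lintegral_ne_top (hQaem.pow_const 2) hne_top).congr
      htoReal_eq.symm
  constructor
  · rw [intervalIntegrable_iff, Set.uIoc_of_le hT.le]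
    exact hInt
  · rw [intervalIntegral.integral_of_le hT.le]
    have h1 : ∫ s in Set.Ioc (0:ℝ) T,
        (∑' j : ℕ, if r ≤ j then ω j * f j s else 0) ^ 2
        = (∫⁻ s, ENNReal.ofReal
            ((∑' j : ℕ, if r ≤ j then ω j * f j s else 0) ^ 2) ∂μ).toReal :=
      integral_eq_lintegral_of_nonneg_ae (Eventually.of_forall fun s => sq_nonneg _)
        hInt.aestronglyMeasurable
    rw [h1]
    have h2 : ∫⁻ s, ENNReal.ofReal
        ((∑' j : ℕ, if r ≤ j then ω j * f j s else 0) ^ 2) ∂μ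
        = ∫⁻ s, (Q s) ^ 2 ∂μ := lintegral_congr_ae key
    have h3 : (∫⁻ s, ENNReal.ofReal
        ((∑' j : ℕ, if r ≤ j then ω j * f j s else 0) ^ 2) ∂μ).toReal ≤ B / r := by
      rw [h2]
      calc (∫⁻ s, (Q s) ^ 2 ∂μ).toReal
          ≤ (ENNReal.ofReal (B / r)).toReal :=
            ENNReal.toReal_mono ENNReal.ofReal_ne_top hlint
        _ = B / r := ENNReal.toReal_ofReal (div_nonneg hB0 hrpos.le)
    refine h3.trans ?_
    -- B / r ≤ 2 * (√r)⁻¹ * B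
    have hr1 : (1:ℝ) ≤ (r:ℝ) := by exact_mod_cast hr
    have hs1 : (1:ℝ) ≤ Real.sqrt r := by
      rw [show (1:ℝ) = Real.sqrt 1 from (Real.sqrt_one).symm]
      exact Real.sqrt_le_sqrt hr1
    have hsle : Real.sqrt r ≤ r := rbk_real_sqrt_le_self hr1
    have hspos : (0:ℝ) < Real.sqrt r := lt_of_lt_of_le one_pos hs1
    have step1 : B / r ≤ B / Real.sqrt r :=
      div_le_div_of_nonneg_left hB0 hspos hsle
    have step2 : B / Real.sqrt r = (Real.sqrt r)⁻¹ * B := by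
      rw [div_eq_inv_mul]
    have step3 : (Real.sqrt r)⁻¹ * B ≤ 2 * (Real.sqrt r)⁻¹ * B := by
      have hnn : 0 ≤ (Real.sqrt r)⁻¹ * B :=
        mul_nonneg (inv_nonneg.mpr hspos.le) hB0
      nlinarith
    linarith [step1, step2 ▸ step1]
end
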